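/- arXiv:2211.15241 — 6 statements merged into one kernel-verified Lean document; each statement's English description precedes it below -/
import Mathlib

section
/- If x* is a global solution of min_{||x||_1=1} ||Ax||_2^2 for a matrix A ∈ R^{D×n} with A^T A invertible, then y* = sgn(x*) is a global solution of max_{y ∈ {-1,+1}^n} y^T (A^T A)^{-1} y. -/
open Matrix Finset

noncomputable section

/-- entrywise sign with sgn(0)=1 -/
def sgn (r : ℝ) : ℝ := if r < 0 then -1 else 1

def l1 {n : ℕ} (x : Fin n → ℝ) : ℝ := ∑ i, |x i|
def l2sq {n : ℕ} (x : Fin n → ℝ) : ℝ := ∑ i, (x i) ^ 2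
def l2 {n : ℕ} (x : Fin n → ℝ) : ℝ := Real.sqrt (l2sq x)

def cl1 {n : ℕ} (x : Fin n → ℂ) : ℝ := ∑ i, ‖x i‖
def cl2sq {n : ℕ} (x : Fin n → ℂ) : ℝ := ∑ i, Complex.normSq (x i)
def cl2 {n : ℕ} (x : Fin n → ℂ) : ℝ := Real.sqrt (cl2sq x)

/-- spectral (ℓ2 operator) norm of a real square matrix -/
def opNorm {n : ℕ} (A : Matrix (Fin n) (Fin n) ℝ) : ℝ :=
  sSup {r | ∃ x : Fin n → ℝ, l2 x = 1 ∧ r = l2 (A.mulVec x)}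

/-- spectral (ℓ2 operator) norm of a complex square matrix -/
def opNormC {n : ℕ} (A : Matrix (Fin n) (Fin n) ℂ) : ℝ :=
  sSup {r | ∃ x : Fin n → ℂ, cl2 x = 1 ∧ r = cl2 (A.mulVec x)}

/-- ℓ∞ operator norm (max absolute row sum) of a real square matrix -/
def infNorm {n : ℕ} (A : Matrix (Fin n) (Fin n) ℝ) : ℝ := ⨆ i, ∑ j, |A i j|

/-- ℓ∞ operator norm (max absolute row sum) of a complex square matrix -/
def infNormC {n : ℕ} (A : Matrix (Fin n) (Fin n) ℂ) : ℝ := ⨆ i, ∑ j, ‖A i j‖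

/-- complex torus: unit-modulus entries -/
def onTorus {n : ℕ} (x : Fin n → ℂ) : Prop := ∀ i, ‖x i‖ = 1

/-- real part of the Hermitian quadratic form x ↦ xᴴ C x -/
def quadC {n : ℕ} (C : Matrix (Fin n) (Fin n) ℂ) (x : Fin n → ℂ) : ℝ :=
  (star x ⬝ᵥ C.mulVec x).re

theorem stmt_0 {D n : ℕ} (hDn : n < D) (A : Matrix (Fin D) (Fin n) ℝ)
    (hinv : IsUnit (Aᵀ * A)) (xs : Fin n → ℝ) (hxs : l1 xs = 1)
    (hopt : ∀ x : Fin n → ℝ, l1 x = 1 → l2sq (A.mulVec xs) ≤ l2sq (A.mulVec x)) :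
    ∀ y : Fin n → ℝ, (∀ i, y i = 1 ∨ y i = -1) →
      y ⬝ᵥ ((Aᵀ * A)⁻¹).mulVec y ≤
        (fun i => sgn (xs i)) ⬝ᵥ ((Aᵀ * A)⁻¹).mulVec (fun i => sgn (xs i)) := by
  intro y hy
  set B : Matrix (Fin n) (Fin n) ℝ := Aᵀ * A with hBdef
  have hdet : IsUnit B.det := (Matrix.isUnit_iff_isUnit_det B).mp hinv
  have hBBi : B * B⁻¹ = 1 := Matrix.mul_nonsing_inv B hdet
  have hBiB : B⁻¹ * B = 1 := Matrix.nonsing_inv_mul B hdet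
  have hBsym : Bᵀ = B := by
    rw [hBdef, Matrix.transpose_mul, Matrix.transpose_transpose]
  have hquad : ∀ z : Fin n → ℝ, z ⬝ᵥ B.mulVec z = l2sq (A.mulVec z) := by
    intro z
    rw [hBdef, ← Matrix.mulVec_mulVec, Matrix.dotProduct_mulVec,
      Matrix.vecMul_transpose]
    simp [l2sq, dotProduct, sq]
  have hpsd : ∀ z : Fin n → ℝ, 0 ≤ z ⬝ᵥ B.mulVec z := by
    intro z
    rw [hquad]
    exact Finset.sum_nonneg fun i _ => sq_nonneg _
  have hsymm : ∀ v w : Fin n → ℝ, v ⬝ᵥ B.mulVec w = w ⬝ᵥ B.mulVec v := by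
    intro v w
    rw [Matrix.dotProduct_mulVec]
    have : Matrix.vecMul v B = B.mulVec v := by
      conv_lhs => rw [← hBsym]
      exact Matrix.vecMul_transpose B v
    rw [this, dotProduct_comm]
  set m : ℝ := l2sq (A.mulVec xs) with hmdef
  have hm_eq : xs ⬝ᵥ B.mulVec xs = m := hquad xs
  have h0m : 0 ≤ m := hm_eq ▸ hpsd xs
  have hm_pos : 0 < m := by
    rcases h0m.lt_or_eq with h | h
    · exact h
    · exfalso
      have hsum : ∑ i, (A.mulVec xs i) ^ 2 = 0 := by
        have : l2sq (A.mulVec xs) = 0 := by rw [← hmdef, ← h]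
        simpa [l2sq] using this
      have hAxs : A.mulVec xs = 0 := by
        funext i
        have hz := (Finset.sum_eq_zero_iff_of_nonneg
          (fun i (_ : i ∈ Finset.univ) => sq_nonneg (A.mulVec xs i))).mp hsum
          i (Finset.mem_univ i)
        exact pow_eq_zero_iff (two_ne_zero) |>.mp hz
      have hBxs : B.mulVec xs = 0 := by
        rw [hBdef, ← Matrix.mulVec_mulVec, hAxs, Matrix.mulVec_zero]
      have hxs0 : xs = 0 := by
        have h2 : (B⁻¹ * B).mulVec xs = B⁻¹.mulVec (B.mulVec xs) :=
          (Matrix.mulVec_mulVec xs B⁻¹ B).symm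
        rw [hBiB, Matrix.one_mulVec, hBxs, Matrix.mulVec_zero] at h2
        exact h2
      rw [hxs0] at hxs
      simp [l1] at hxs
  have hm' : m ≠ 0 := ne_of_gt hm_pos
  set s : Fin n → ℝ := fun i => sgn (xs i) with hsdef
  have hs_mul : ∀ i, s i * xs i = |xs i| := by
    intro i
    simp only [hsdef, sgn]
    split
    · rw [abs_of_neg (by assumption)]; ring
    · rw [abs_of_nonneg (le_of_not_gt (by assumption))]; ring
  have hs_dot : s ⬝ᵥ xs = 1 := by
    rw [dotProduct]
    rw [show (∑ i, s i * xs i) = ∑ i, |xs i| from Finset.sum_congr rfl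
      fun i _ => hs_mul i]
    exact hxs
  -- lower bound: 1/m ≤ sᵀ B⁻¹ s
  have key1 : 1 / m ≤ s ⬝ᵥ B⁻¹.mulVec s := by
    have hBu : B.mulVec (B⁻¹.mulVec s) = s := by
      rw [Matrix.mulVec_mulVec, hBBi, Matrix.one_mulVec]
    set u : Fin n → ℝ := B⁻¹.mulVec s with hudef
    have h0 := hpsd (u - (1 / m) • xs)
    have hexp : (u - (1 / m) • xs) ⬝ᵥ B.mulVec (u - (1 / m) • xs)
        = u ⬝ᵥ B.mulVec u - (2 / m) * (u ⬝ᵥ B.mulVec xs)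
          + (1 / m) ^ 2 * (xs ⬝ᵥ B.mulVec xs) := by
      rw [Matrix.mulVec_sub, Matrix.mulVec_smul, sub_dotProduct,
        smul_dotProduct, dotProduct_sub, dotProduct_sub,
        dotProduct_smul, dotProduct_smul, hsymm xs u]
      simp only [smul_eq_mul]
      ring
    have huBu : u ⬝ᵥ B.mulVec u = s ⬝ᵥ u := by
      rw [hBu, dotProduct_comm]
    have huBxs : u ⬝ᵥ B.mulVec xs = 1 := by
      rw [hsymm u xs, hBu, dotProduct_comm]
      exact hs_dot
    rw [hexp, huBu, huBxs, hm_eq] at h0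
    have hsq : (1 / m) ^ 2 * m = 1 / m := by field_simp
    rw [hsq] at h0
    show 1 / m ≤ s ⬝ᵥ u
    have h2m : 2 / m = 1 / m + 1 / m := by ring
    linarith [h0, h2m]
  -- upper bound: yᵀ B⁻¹ y ≤ 1/m
  have key2 : y ⬝ᵥ B⁻¹.mulVec y ≤ 1 / m := by
    rcases le_or_gt (y ⬝ᵥ B⁻¹.mulVec y) 0 with ht | ht
    · exact le_trans ht (by positivity)
    · have hBv : B.mulVec (B⁻¹.mulVec y) = y := by
        rw [Matrix.mulVec_mulVec, hBBi, Matrix.one_mulVec]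
      set v : Fin n → ℝ := B⁻¹.mulVec y with hvdef
      set c : ℝ := l1 v with hcdef
      have htc : y ⬝ᵥ v ≤ c := by
        calc y ⬝ᵥ v = ∑ i, y i * v i := rfl
        _ ≤ ∑ i, |y i * v i| := Finset.sum_le_sum fun i _ => le_abs_self _
        _ = ∑ i, |v i| := Finset.sum_congr rfl fun i _ => by
            rcases hy i with h | h <;> rw [abs_mul, h] <;> simp
        _ = c := rfl
      have hc_pos : 0 < c := lt_of_lt_of_le ht htc
      have hc' : c ≠ 0 := ne_of_gt hc_pos
      have hl1x : l1 ((1 / c) • v) = 1 := by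
        have h2 : l1 ((1 / c) • v) = |1 / c| * l1 v := by
          simp only [l1, Pi.smul_apply, smul_eq_mul, abs_mul, ← Finset.mul_sum]
        rw [h2, abs_of_pos (by positivity), ← hcdef]
        field_simp
      have hmle := hopt _ hl1x
      have hxval : l2sq (A.mulVec ((1 / c) • v)) = (1 / c) ^ 2 * (y ⬝ᵥ v) := by
        rw [← hquad, Matrix.mulVec_smul, smul_dotProduct,
          dotProduct_smul, hBv, smul_eq_mul, smul_eq_mul,
          dotProduct_comm]
        ring
      rw [hxval] at hmle
      have h1 : m * c ^ 2 ≤ y ⬝ᵥ v := by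
        have h2 := mul_le_mul_of_nonneg_right hmle (sq_nonneg c)
        have h3 : (1 / c) ^ 2 * (y ⬝ᵥ v) * c ^ 2 = y ⬝ᵥ v := by
          field_simp
        linarith [h2, h3]
      rw [le_div_iff₀ hm_pos]
      nlinarith [h1, htc, ht, hm_pos,
        mul_le_mul_of_nonneg_left (mul_le_mul htc htc ht.le hc_pos.le) hm_pos.le]
  exact le_trans key2 key1
end
end

section
/- For any real n×n matrix T, max over x with ||x||_2 = 1 of ||Tx||_1 equals max over y ∈ {-1,+1}^n of sqrt(y^T T T^T y); equivalently, max_{||x||_2=1} ||Tx||_1 = max_{y∈{-1,1}^n} ||T^T y||_2. -/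
open Matrix Finset

noncomputable section

lemma l2sq_nonneg {n : ℕ} (x : Fin n → ℝ) : 0 ≤ l2sq x :=
  Finset.sum_nonneg fun _ _ => sq_nonneg _

lemma l2_nonneg {n : ℕ} (x : Fin n → ℝ) : 0 ≤ l2 x := Real.sqrt_nonneg _

lemma l1_nonneg {n : ℕ} (x : Fin n → ℝ) : 0 ≤ l1 x :=
  Finset.sum_nonneg fun _ _ => abs_nonneg _

lemma cs {n : ℕ} (u v : Fin n → ℝ) : u ⬝ᵥ v ≤ l2 u * l2 v := by
  have h := sum_mul_sq_le_sq_mul_sq Finset.univ u v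
  calc u ⬝ᵥ v ≤ |u ⬝ᵥ v| := le_abs_self _
    _ = Real.sqrt ((∑ i, u i * v i) ^ 2) := by rw [Real.sqrt_sq_eq_abs]; rfl
    _ ≤ Real.sqrt (l2sq u * l2sq v) := Real.sqrt_le_sqrt h
    _ = l2 u * l2 v := Real.sqrt_mul (l2sq_nonneg u) _

lemma l2_smul {n : ℕ} (a : ℝ) (x : Fin n → ℝ) : l2 (a • x) = |a| * l2 x := by
  unfold l2 l2sq
  rw [← Real.sqrt_sq_eq_abs, ← Real.sqrt_mul (sq_nonneg a), Finset.mul_sum]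
  congr 1; apply Finset.sum_congr rfl; intro i _
  simp [mul_pow]

theorem stmt_1 {n : ℕ} (T : Matrix (Fin n) (Fin n) ℝ) :
    sSup {r | ∃ x : Fin n → ℝ, l2 x = 1 ∧ r = l1 (T.mulVec x)} =
      sSup {r | ∃ y : Fin n → ℝ, (∀ i, y i = 1 ∨ y i = -1) ∧ r = l2 (Tᵀ.mulVec y)} := by
  set A := {r | ∃ x : Fin n → ℝ, l2 x = 1 ∧ r = l1 (T.mulVec x)} with hA
  set B := {r | ∃ y : Fin n → ℝ, (∀ i, y i = 1 ∨ y i = -1) ∧ r = l2 (Tᵀ.mulVec y)} with hBdef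
  -- B is finite, hence bounded above
  have hBfin : B.Finite := by
    have : B ⊆ (fun y : Fin n → ℝ => l2 (Tᵀ.mulVec y)) ''
        (Set.pi Set.univ fun _ : Fin n => ({1, -1} : Set ℝ)) := by
      rintro r ⟨y, hy, rfl⟩
      exact ⟨y, fun i _ => hy i, rfl⟩
    exact Set.Finite.subset (Set.Finite.image _
      (Set.Finite.pi fun _ => Set.toFinite _)) this
  have hBbdd : BddAbove B := hBfin.bddAbove
  have hBne : B.Nonempty := ⟨_, fun _ => 1, fun _ => Or.inl rfl, rfl⟩
  have hBnonneg : 0 ≤ sSup B := by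
    obtain ⟨r, y, hy, rfl⟩ := hBne
    exact le_trans (l2_nonneg _) (le_csSup hBbdd ⟨y, hy, rfl⟩)
  -- key dot product identity
  have key : ∀ (y x : Fin n → ℝ), y ⬝ᵥ T.mulVec x = (Tᵀ.mulVec y) ⬝ᵥ x := by
    intro y x
    rw [Matrix.dotProduct_mulVec, Matrix.mulVec_transpose]
  -- upper: each element of A is ≤ sSup B
  have hup : ∀ r ∈ A, r ≤ sSup B := by
    rintro r ⟨x, hx, rfl⟩
    set y : Fin n → ℝ := fun i => sgn (T.mulVec x i) with hy
    have hy1 : ∀ i, y i = 1 ∨ y i = -1 := by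
      intro i; simp only [hy]; unfold sgn; split <;> simp
    have habs : ∀ i, y i * T.mulVec x i = |T.mulVec x i| := by
      intro i; simp only [hy]; unfold sgn
      rcases lt_trichotomy (T.mulVec x i) 0 with h | h | h
      · rw [if_pos h, abs_of_neg h]; ring
      · simp [h]
      · rw [if_neg (not_lt.2 h.le), abs_of_pos h]; ring
    have h1 : l1 (T.mulVec x) = y ⬝ᵥ T.mulVec x := by
      unfold l1 dotProduct
      exact (Finset.sum_congr rfl fun i _ => (habs i).symm)
    calc l1 (T.mulVec x) = (Tᵀ.mulVec y) ⬝ᵥ x := by rw [h1, key]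
      _ ≤ l2 (Tᵀ.mulVec y) * l2 x := cs _ _
      _ = l2 (Tᵀ.mulVec y) := by rw [hx, mul_one]
      _ ≤ sSup B := le_csSup hBbdd ⟨y, hy1, rfl⟩
  have hAbdd : BddAbove A := ⟨sSup B, hup⟩
  rcases Nat.eq_zero_or_pos n with hn | hn
  · -- n = 0
    subst hn
    have hAempty : A = ∅ := by
      ext r
      simp only [hA, Set.mem_setOf_eq, Set.mem_empty_iff_false, iff_false]
      rintro ⟨x, hx, -⟩
      simp [l2, l2sq] at hx
    have hBsingle : B = {0} := by
      ext r
      simp only [hBdef, Set.mem_setOf_eq, Set.mem_singleton_iff]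
      constructor
      · rintro ⟨y, -, rfl⟩; simp [l2, l2sq]
      · rintro rfl
        exact ⟨fun i => 1, fun i => i.elim0, by simp [l2, l2sq]⟩
    rw [hAempty, hBsingle, Real.sSup_empty, csSup_singleton]
  · -- n ≥ 1
    have hAne : A.Nonempty := by
      refine ⟨_, (Pi.single (⟨0, hn⟩ : Fin n) (1:ℝ)), ?_, rfl⟩
      have h1 : l2sq (Pi.single (⟨0, hn⟩ : Fin n) (1:ℝ)) = 1 := by
        unfold l2sq
        rw [Finset.sum_eq_single (⟨0, hn⟩ : Fin n)]
        · simp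
        · intro b _ hb; simp [Pi.single_eq_of_ne hb]
        · simp
      unfold l2; rw [h1]; exact Real.sqrt_one
    have hAnonneg : 0 ≤ sSup A := by
      obtain ⟨r, x, hx, rfl⟩ := hAne
      exact le_trans (l1_nonneg _) (le_csSup hAbdd ⟨x, hx, rfl⟩)
    refine le_antisymm (Real.sSup_le hup hBnonneg) (Real.sSup_le ?_ hAnonneg)
    rintro r ⟨y, hy, rfl⟩
    set w := Tᵀ.mulVec y with hw
    set c := l2 w with hc
    rcases eq_or_lt_of_le (l2_nonneg w) with hc0 | hc0
    · rw [hc, ← hc0]; exact hAnonneg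
    · -- c > 0, take x = c⁻¹ • w
      set x := c⁻¹ • w with hx
      have hl2x : l2 x = 1 := by
        rw [hx, l2_smul, abs_of_pos (inv_pos.2 hc0), ← hc, inv_mul_cancel₀ (ne_of_gt hc0)]
      have hdot : (Tᵀ.mulVec y) ⬝ᵥ x = c := by
        rw [hx, dotProduct_smul, ← hw]
        have : w ⬝ᵥ w = c ^ 2 := by
          rw [hc]; unfold l2
          rw [Real.sq_sqrt (l2sq_nonneg w)]
          unfold dotProduct l2sq
          exact Finset.sum_congr rfl fun i _ => (sq (w i)).symm
        rw [this, smul_eq_mul, sq, ← mul_assoc, inv_mul_cancel₀ (ne_of_gt hc0), one_mul]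
      have hle : c ≤ l1 (T.mulVec x) := by
        rw [← hdot, ← key]
        unfold dotProduct l1
        apply Finset.sum_le_sum
        intro i _
        calc y i * T.mulVec x i ≤ |y i * T.mulVec x i| := le_abs_self _
          _ = |T.mulVec x i| := by
              rw [abs_mul]
              rcases hy i with h | h <;> simp [h]
      exact le_trans hle (le_csSup hAbdd ⟨x, hl2x, rfl⟩)
end
end

section
/- Let C be a Hermitian N×N matrix and x* a global maximizer of f(x) = x^H C x over the torus T^N = {x ∈ C^N : |x_i| = 1 for all i}. Then for any x ∈ T^N, 0 ≤ f(x*) - f(x) ≤ -N λ_min(S(x)), where S(x) = Re(ddiag(C x x^H)) - C and ddiag zeros out off-diagonal entries. In particular, if S(x) ⪰ 0 then x is a global maximizer. -/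
open Matrix Finset

noncomputable section

/-- Riemannian-Hessian-type matrix S(x) = Re(ddiag(C x xᴴ)) - C -/
def Smat {N : ℕ} (C : Matrix (Fin N) (Fin N) ℂ) (x : Fin N → ℂ) :
    Matrix (Fin N) (Fin N) ℂ :=
  Matrix.diagonal (fun i => (((C.mulVec x) i * (starRingEnd ℂ) (x i)).re : ℂ)) - C


lemma quadC_Smat_torus {N : ℕ} (C : Matrix (Fin N) (Fin N) ℂ) (x : Fin N → ℂ)
    (hx : onTorus x) (u : Fin N → ℂ) (hu : onTorus u) :
    quadC (Smat C x) u = quadC C x - quadC C u := by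
  have hterm : ∀ (v : Fin N → ℂ), onTorus v →
      quadC C v = ∑ i, ((C.mulVec v) i * (starRingEnd ℂ) (v i)).re := by
    intro v hv
    simp only [quadC, dotProduct, Complex.re_sum, Pi.star_apply]
    refine Finset.sum_congr rfl fun i _ => ?_
    rw [mul_comm]
    rfl
  have hdiag : quadC (Matrix.diagonal
      (fun i => (((C.mulVec x) i * (starRingEnd ℂ) (x i)).re : ℂ))) u = quadC C x := by
    rw [hterm x hx]
    simp only [quadC, dotProduct, Matrix.mulVec_diagonal, Complex.re_sum, Pi.star_apply]
    refine Finset.sum_congr rfl fun i _ => ?_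
    have h1 : (starRingEnd ℂ) (u i) * u i = (1 : ℂ) := by
      rw [mul_comm, Complex.mul_conj]
      norm_cast
      rw [Complex.normSq_eq_norm_sq, hu i, one_pow]
    have : star (u i) * ((((C.mulVec x) i * (starRingEnd ℂ) (x i)).re : ℂ)) * u i
        = (((C.mulVec x) i * (starRingEnd ℂ) (x i)).re : ℂ) := by
      rw [mul_comm (star (u i)) _, mul_assoc]
      change _ * ((starRingEnd ℂ) (u i) * u i) = _
      rw [h1, mul_one]
    rw [show star (u i) * ((((C.mulVec x) i * (starRingEnd ℂ) (x i)).re : ℂ) * u i)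
        = star (u i) * (((C.mulVec x) i * (starRingEnd ℂ) (x i)).re : ℂ) * u i by ring,
      this, Complex.ofReal_re]
  have : quadC (Smat C x) u = quadC (Matrix.diagonal
      (fun i => (((C.mulVec x) i * (starRingEnd ℂ) (x i)).re : ℂ))) u - quadC C u := by
    simp only [quadC, Smat, Matrix.sub_mulVec, dotProduct_sub, Complex.sub_re]
  rw [this, hdiag]

lemma cl2sq_torus {N : ℕ} (u : Fin N → ℂ) (hu : onTorus u) : cl2sq u = N := by
  simp only [cl2sq]
  rw [Finset.sum_congr rfl fun i _ => by
    rw [Complex.normSq_eq_norm_sq, hu i, one_pow]]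
  simp

theorem stmt_5 {N : ℕ} (C : Matrix (Fin N) (Fin N) ℂ) (hC : C.IsHermitian)
    (xs : Fin N → ℂ) (hxs : onTorus xs)
    (hopt : ∀ y : Fin N → ℂ, onTorus y → quadC C y ≤ quadC C xs)
    (x : Fin N → ℂ) (hx : onTorus x)
    (lmin : ℝ)
    (hlmin : IsGreatest {t : ℝ | ∀ u : Fin N → ℂ, t * cl2sq u ≤ quadC (Smat C x) u} lmin) :
    (0 ≤ quadC C xs - quadC C x ∧ quadC C xs - quadC C x ≤ -(N : ℝ) * lmin) ∧
      ((∀ u : Fin N → ℂ, 0 ≤ quadC (Smat C x) u) →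
        ∀ y : Fin N → ℂ, onTorus y → quadC C y ≤ quadC C x) := by
  have hmem := hlmin.1
  have h1 : 0 ≤ quadC C xs - quadC C x := sub_nonneg.2 (hopt x hx)
  have hS : quadC (Smat C x) xs = quadC C x - quadC C xs :=
    quadC_Smat_torus C x hx xs hxs
  have h2 : quadC C xs - quadC C x ≤ -(N : ℝ) * lmin := by
    have := hmem xs
    rw [hS, cl2sq_torus xs hxs] at this
    linarith
  refine ⟨⟨h1, h2⟩, fun hpos y hy => ?_⟩
  have := hpos y
  rw [quadC_Smat_torus C x hx y hy] at this
  linarith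
end
end

section
/- Let Σ be a symmetric positive semidefinite N×N matrix with Moore–Penrose pseudoinverse Σ† and let u span the null space of Σ (with ||u||_2² = N, Σ of rank N-1). If σ||Σ†|| < 1, then the operator norm ||σN(Σ + σI)^{-1} - u u^T|| ≤ Nσ||Σ†|| / (1 - σ||Σ†||). -/
open Matrix Finset

noncomputable section

set_option synthInstance.maxHeartbeats 1000000
set_option maxHeartbeats 1000000

lemma l2_eq_norm {n : ℕ} (x : Fin n → ℝ) :
    l2 x = ‖(WithLp.equiv 2 (Fin n → ℝ)).symm x‖ := by
  rw [EuclideanSpace.norm_eq]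
  unfold l2 l2sq
  congr 1
  refine Finset.sum_congr rfl fun i _ => ?_
  simp [Real.norm_eq_abs, sq_abs]

lemma opNorm_eq {n : ℕ} (A : Matrix (Fin n) (Fin n) ℝ) :
    opNorm A = ‖toEuclideanCLM (𝕜 := ℝ) A‖ := by
  set T := toEuclideanCLM (𝕜 := ℝ) A with hT
  have hTx : ∀ x : Fin n → ℝ, l2 (A.mulVec x) = ‖T ((WithLp.equiv 2 (Fin n → ℝ)).symm x)‖ := by
    intro x
    rw [l2_eq_norm, hT, WithLp.equiv_symm_apply, toEuclideanCLM_toLp]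
  have hub : ∀ r ∈ {r | ∃ x : Fin n → ℝ, l2 x = 1 ∧ r = l2 (A.mulVec x)}, r ≤ ‖T‖ := by
    rintro r ⟨x, hx, rfl⟩
    rw [hTx]
    calc ‖T ((WithLp.equiv 2 (Fin n → ℝ)).symm x)‖
        ≤ ‖T‖ * ‖(WithLp.equiv 2 (Fin n → ℝ)).symm x‖ := T.le_opNorm _
      _ = ‖T‖ := by rw [← l2_eq_norm, hx, mul_one]
  refine le_antisymm (Real.sSup_le hub (norm_nonneg _)) ?_
  have hnn : ∀ r ∈ {r | ∃ x : Fin n → ℝ, l2 x = 1 ∧ r = l2 (A.mulVec x)}, 0 ≤ r := by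
    rintro r ⟨x, hx, rfl⟩; exact Real.sqrt_nonneg _
  refine T.opNorm_le_bound (Real.sSup_nonneg hnn) fun y => ?_
  rcases eq_or_ne y 0 with rfl | hy
  · simp
  · have hyn : ‖y‖ ≠ 0 := norm_ne_zero_iff.mpr hy
    set c : ℝ := ‖y‖⁻¹ with hc
    set x : Fin n → ℝ := c • (WithLp.equiv 2 (Fin n → ℝ)) y with hxdef
    have hsymm : (WithLp.equiv 2 (Fin n → ℝ)).symm x = c • y := by
      rw [hxdef]; simp [WithLp.equiv_symm_apply]
    have hx1 : l2 x = 1 := by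
      rw [l2_eq_norm, hsymm, norm_smul, hc, norm_inv, norm_norm, inv_mul_cancel₀ hyn]
    have hmem : l2 (A.mulVec x) ∈ {r | ∃ x : Fin n → ℝ, l2 x = 1 ∧ r = l2 (A.mulVec x)} :=
      ⟨x, hx1, rfl⟩
    have hle := le_csSup ⟨‖T‖, hub⟩ hmem
    have hval : l2 (A.mulVec x) = c * ‖T y‖ := by
      rw [hTx, hsymm, _root_.map_smul, norm_smul, hc, norm_inv, norm_norm]
    rw [hval] at hle
    have hcpos : 0 < c := by positivity
    calc ‖T y‖ = (c * ‖T y‖) * ‖y‖ := by rw [hc]; field_simp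
      _ ≤ sSup {r | ∃ x : Fin n → ℝ, l2 x = 1 ∧ r = l2 (A.mulVec x)} * ‖y‖ :=
          mul_le_mul_of_nonneg_right hle (norm_nonneg _)

lemma opNorm_nonneg {n : ℕ} (A : Matrix (Fin n) (Fin n) ℝ) : 0 ≤ opNorm A := by
  rw [opNorm_eq]; exact norm_nonneg _

lemma opNorm_smul {n : ℕ} (c : ℝ) (A : Matrix (Fin n) (Fin n) ℝ) :
    opNorm (c • A) = |c| * opNorm A := by
  rw [opNorm_eq, opNorm_eq, _root_.map_smul]
  rw [norm_smul c (toEuclideanCLM (𝕜 := ℝ) A), Real.norm_eq_abs]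

lemma opNorm_mul_le {n : ℕ} (A B : Matrix (Fin n) (Fin n) ℝ) :
    opNorm (A * B) ≤ opNorm A * opNorm B := by
  rw [opNorm_eq, opNorm_eq, opNorm_eq, _root_.map_mul]
  exact norm_mul_le _ _

lemma opNorm_sub_le {n : ℕ} (A B : Matrix (Fin n) (Fin n) ℝ) :
    opNorm (A - B) ≤ opNorm A + opNorm B := by
  rw [opNorm_eq, opNorm_eq, opNorm_eq, map_sub]
  exact norm_sub_le _ _

theorem stmt_9 {N : ℕ} (Sig : Matrix (Fin N) (Fin N) ℝ) (hPSD : Sig.PosSemidef)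
    (hrank : Sig.rank = N - 1)
    (u : Fin N → ℝ) (hu : Sig.mulVec u = 0) (hunorm : l2sq u = N)
    (P : Matrix (Fin N) (Fin N) ℝ)
    (hP1 : Sig * P * Sig = Sig) (hP2 : P * Sig * P = P)
    (hP3 : (Sig * P)ᵀ = Sig * P) (hP4 : (P * Sig)ᵀ = P * Sig)
    (σ : ℝ) (hσ : 0 < σ) (hsmall : σ * opNorm P < 1) :
    opNorm ((σ * N) • (Sig + σ • (1 : Matrix (Fin N) (Fin N) ℝ))⁻¹ - Matrix.vecMulVec u u) ≤
      N * σ * opNorm P / (1 - σ * opNorm P) := by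
  classical
  rcases Nat.eq_zero_or_pos N with hN | hN
  · subst hN
    have h0 : ∀ B : Matrix (Fin 0) (Fin 0) ℝ, opNorm B = 0 := by
      intro B
      rw [opNorm_eq]
      have : (toEuclideanCLM (𝕜 := ℝ) B) = 0 := Subsingleton.elim _ _
      rw [this, norm_zero]
    rw [h0]
    rw [Nat.cast_zero]
    rw [zero_mul, zero_mul, zero_div]
  have hNR : (0:ℝ) < N := by exact_mod_cast hN
  have hsym : Sigᵀ = Sig := hPSD.1
  have hSPu : (Sig * P) *ᵥ u = 0 := by
    rw [← hP3, transpose_mul, hsym, ← mulVec_mulVec, hu, mulVec_zero]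
  have hPu : P *ᵥ u = 0 := by
    calc P *ᵥ u = (P * (Sig * P)) *ᵥ u := by rw [← mul_assoc, hP2]
      _ = P *ᵥ ((Sig * P) *ᵥ u) := by rw [mulVec_mulVec]
      _ = 0 := by rw [hSPu, mulVec_zero]
  have hPtu : Pᵀ *ᵥ u = 0 := by
    have h5 : Pᵀ = Pᵀ * (P * Sig) := by
      calc Pᵀ = (P * Sig * P)ᵀ := by rw [hP2]
        _ = Pᵀ * (P * Sig)ᵀ := by rw [transpose_mul]
        _ = Pᵀ * (P * Sig) := by rw [hP4]
    rw [h5, ← mulVec_mulVec, ← mulVec_mulVec, hu, mulVec_zero, mulVec_zero]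
  have huuP : vecMulVec u u * P = 0 := by
    ext i j
    simp only [Matrix.mul_apply, vecMulVec_apply, Matrix.zero_apply]
    have h1 : ∑ k, u i * u k * P k j = u i * ∑ k, Pᵀ j k * u k := by
      rw [Finset.mul_sum]
      refine Finset.sum_congr rfl fun k _ => ?_
      rw [Matrix.transpose_apply]; ring
    rw [h1]
    have h0 : ∑ k, Pᵀ j k * u k = (Pᵀ *ᵥ u) j := rfl
    rw [h0, hPtu]
    simp
  have hSuu : Sig * vecMulVec u u = 0 := by
    ext i j
    simp only [Matrix.mul_apply, vecMulVec_apply, Matrix.zero_apply]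
    have h1 : ∑ k, Sig i k * (u k * u j) = (∑ k, Sig i k * u k) * u j := by
      rw [Finset.sum_mul]
      refine Finset.sum_congr rfl fun k _ => by ring
    rw [h1]
    have h0 : ∑ k, Sig i k * u k = (Sig *ᵥ u) i := rfl
    rw [h0, hu]
    simp
  have huuS : vecMulVec u u * Sig = 0 := by
    ext i j
    simp only [Matrix.mul_apply, vecMulVec_apply, Matrix.zero_apply]
    have h1 : ∑ k, u i * u k * Sig k j = u i * ∑ k, Sigᵀ j k * u k := by
      rw [Finset.mul_sum]
      refine Finset.sum_congr rfl fun k _ => ?_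
      rw [Matrix.transpose_apply]; ring
    rw [h1]
    have h0 : ∑ k, Sigᵀ j k * u k = (Sigᵀ *ᵥ u) j := rfl
    rw [h0, hsym, hu]
    simp
  -- key projection identity
  set R : Matrix (Fin N) (Fin N) ℝ := 1 - Sig * P - (N:ℝ)⁻¹ • vecMulVec u u with hRdef
  have hRS : R * Sig = 0 := by
    rw [hRdef, sub_mul, sub_mul, one_mul, Matrix.smul_mul, hP1, huuS, smul_zero, sub_self,
      zero_sub, neg_zero]
  have hNne : (N:ℝ) ≠ 0 := ne_of_gt hNR
  have hRu : R *ᵥ u = 0 := by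
    have h2 : vecMulVec u u *ᵥ u = (N:ℝ) • u := by
      ext i
      have : (vecMulVec u u *ᵥ u) i = ∑ j, u i * u j * u j := rfl
      rw [this]
      have h3 : ∑ j, u i * u j * u j = u i * ∑ j, (u j)^2 := by
        rw [Finset.mul_sum]
        refine Finset.sum_congr rfl fun k _ => by ring
      rw [h3]
      have h4 : ∑ j, (u j)^2 = (N:ℝ) := hunorm
      rw [h4, Pi.smul_apply, smul_eq_mul]
      ring
    rw [hRdef, sub_mulVec, sub_mulVec, one_mulVec, smul_mulVec, h2, smul_smul,
      inv_mul_cancel₀ hNne, one_smul, hSPu]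
    simp
  have hune : u ≠ 0 := by
    intro h
    rw [h] at hunorm
    unfold l2sq at hunorm
    simp at hunorm
    rw [← hunorm] at hNR
    exact lt_irrefl _ hNR
  have huu : u ⬝ᵥ u = (N:ℝ) := by
    have : u ⬝ᵥ u = ∑ i, (u i)^2 := by
      unfold dotProduct
      exact Finset.sum_congr rfl fun i _ => (sq (u i)).symm
    rw [this]; exact hunorm
  have htop : LinearMap.range Sig.mulVecLin ⊔ (ℝ ∙ u) = ⊤ := by
    have hinf : LinearMap.range Sig.mulVecLin ⊓ (ℝ ∙ u) = ⊥ := by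
      rw [eq_bot_iff]
      rintro x ⟨hxr, hxs⟩
      obtain ⟨v, hv⟩ := hxr
      obtain ⟨c, hcx⟩ := Submodule.mem_span_singleton.mp hxs
      have hdot : u ⬝ᵥ x = 0 := by
        rw [← hv, Matrix.mulVecLin_apply, Matrix.dotProduct_mulVec]
        have hvm : u ᵥ* Sig = 0 := by rw [← hsym, Matrix.vecMul_transpose, hu]
        rw [hvm, zero_dotProduct]
      rw [← hcx, dotProduct_smul, smul_eq_mul, huu] at hdot
      have hc : c = 0 := by
        rcases mul_eq_zero.mp hdot with h | h
        · exact h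
        · exact absurd h hNne
      rw [← hcx, hc, zero_smul]
      exact Submodule.zero_mem ⊥
    have hfr := Submodule.finrank_sup_add_finrank_inf_eq (LinearMap.range Sig.mulVecLin) (ℝ ∙ u)
    rw [hinf, finrank_bot, add_zero] at hfr
    have hr1 : Module.finrank ℝ (LinearMap.range Sig.mulVecLin) = N - 1 := hrank
    have hr2 : Module.finrank ℝ ↥(ℝ ∙ u) = 1 := finrank_span_singleton hune
    rw [hr1, hr2] at hfr
    refine Submodule.eq_top_of_finrank_eq ?_
    rw [hfr]
    have : Module.finrank ℝ (Fin N → ℝ) = N := by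
      simp [Module.finrank_pi]
    rw [this]
    omega
  have hR0 : R = 0 := by
    have hall : ∀ x : Fin N → ℝ, R *ᵥ x = 0 := by
      intro x
      have hx : x ∈ LinearMap.range Sig.mulVecLin ⊔ (ℝ ∙ u) := htop ▸ Submodule.mem_top
      obtain ⟨y, hy, z, hz, rfl⟩ := Submodule.mem_sup.mp hx
      obtain ⟨v, rfl⟩ := hy
      obtain ⟨c, rfl⟩ := Submodule.mem_span_singleton.mp hz
      rw [Matrix.mulVec_add, Matrix.mulVecLin_apply, Matrix.mulVec_mulVec, hRS,
        Matrix.zero_mulVec, Matrix.mulVec_smul, hRu, smul_zero, add_zero]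
    ext i j
    have h6 := congrFun (hall (Pi.single j 1)) i
    rw [Matrix.mulVec_single] at h6
    simpa using h6
  have hkey : Sig * P + (N:ℝ)⁻¹ • vecMulVec u u = 1 := by
    have h := hR0
    rw [hRdef, sub_sub, sub_eq_zero] at h
    exact h.symm
  -- invertibility of A = Sig + σ•1
  set A := Sig + σ • (1 : Matrix (Fin N) (Fin N) ℝ) with hAdef
  have hApd : A.PosDef := by
    refine Matrix.PosDef.of_dotProduct_mulVec_pos ?_ ?_
    · show Aᴴ = A
      rw [hAdef, conjTranspose_add, conjTranspose_smul, conjTranspose_one]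
      rw [hPSD.1]
      congr 1
    · intro x hx
      have hstar : star x = x := by
        funext i; simp
      obtain ⟨i, hi⟩ := Function.ne_iff.mp hx
      have h3 : 0 < x ⬝ᵥ x := by
        unfold dotProduct
        refine Finset.sum_pos' (fun k _ => mul_self_nonneg _) ⟨i, Finset.mem_univ i, ?_⟩
        exact mul_self_pos.mpr hi
      have h2 := hPSD.dotProduct_mulVec_nonneg x
      rw [hstar] at h2 ⊢
      rw [hAdef, Matrix.add_mulVec, Matrix.smul_mulVec, Matrix.one_mulVec,
        dotProduct_add, dotProduct_smul, smul_eq_mul]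
      nlinarith
  have hdet : IsUnit A.det := (Matrix.isUnit_iff_isUnit_det A).mp hApd.isUnit
  have hAinv : A⁻¹ * A = 1 := Matrix.nonsing_inv_mul A hdet
  have hσN : (σ * (N:ℝ)) ≠ 0 := ne_of_gt (mul_pos hσ hNR)
  have h9 : A * (P + (σ * (N:ℝ))⁻¹ • vecMulVec u u) = 1 + σ • P := by
    have e1 : (σ:ℝ) • ((σ * (N:ℝ))⁻¹ • vecMulVec u u) = (N:ℝ)⁻¹ • vecMulVec u u := by
      rw [smul_smul]
      congr 1
      field_simp
    rw [hAdef]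
    calc (Sig + σ • (1 : Matrix (Fin N) (Fin N) ℝ)) * (P + (σ * (N:ℝ))⁻¹ • vecMulVec u u)
        = Sig * P + (σ * (N:ℝ))⁻¹ • (Sig * vecMulVec u u)
          + (σ • P + σ • ((σ * (N:ℝ))⁻¹ • vecMulVec u u)) := by
          simp only [add_mul, mul_add, Matrix.mul_smul, Matrix.smul_mul, one_mul, smul_smul, mul_comm]
          abel
      _ = Sig * P + (N:ℝ)⁻¹ • vecMulVec u u + σ • P := by
          rw [hSuu, smul_zero, add_zero, e1]; abel
      _ = 1 + σ • P := by rw [hkey]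
  have h10 : A⁻¹ * (1 + σ • P) = P + (σ * (N:ℝ))⁻¹ • vecMulVec u u := by
    rw [← h9, ← mul_assoc, hAinv, one_mul]
  set M := (σ * (N:ℝ)) • A⁻¹ - vecMulVec u u with hMdef
  have h11 : M + σ • (M * P) = (σ * (N:ℝ)) • P := by
    have h12 : M * (1 + σ • P) = (σ * (N:ℝ)) • P := by
      rw [hMdef, sub_mul, Matrix.smul_mul, h10]
      rw [mul_add, mul_one, Matrix.mul_smul, huuP, smul_zero, add_zero]
      rw [smul_add, smul_smul, mul_inv_cancel₀ hσN, one_smul]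
      abel
    calc M + σ • (M * P) = M * (1 + σ • P) := by rw [mul_add, mul_one, Matrix.mul_smul]
      _ = _ := h12
  have hM2 : M = (σ * (N:ℝ)) • P - σ • (M * P) := by
    rw [← h11]; abel
  have hb := opNorm_sub_le ((σ * (N:ℝ)) • P) (σ • (M * P))
  rw [← hM2, opNorm_smul, opNorm_smul] at hb
  have hMP := opNorm_mul_le M P
  have hp0 : 0 ≤ opNorm P := opNorm_nonneg P
  have ha0 : 0 ≤ opNorm M := opNorm_nonneg M
  rw [abs_of_pos (mul_pos hσ hNR), abs_of_pos hσ] at hb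
  rw [le_div_iff₀ (by linarith : (0:ℝ) < 1 - σ * opNorm P)]
  nlinarith [mul_le_mul_of_nonneg_left hMP (le_of_lt hσ)]
end
end

section
/- Let f(x) = x^H C x where C is a Hermitian PSD N×N matrix with C ⪰ a₀ I for some a₀ > 0. Let x^{k+1} = argmax_{y ∈ T^N} Re⟨y, C x^k⟩ (the generalized power method step, i.e., x^{k+1} = sgn(C x^k)). Then f(x^{k+1}) - f(x^k) ≥ a₀ ||x^{k+1} - x^k||_2², i.e., each iteration achieves sufficient ascent. -/
open Matrix Finset

noncomputable section

lemma herm_swap {N : ℕ} (C : Matrix (Fin N) (Fin N) ℂ) (hC : C.IsHermitian)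
    (u v : Fin N → ℂ) :
    star u ⬝ᵥ C.mulVec v = star (star v ⬝ᵥ C.mulVec u) := by
  simp only [dotProduct, mulVec, Pi.star_apply, star_sum, star_mul', Finset.mul_sum]
  rw [Finset.sum_comm]
  congr 1; ext i; congr 1; ext j
  have h := hC.apply i j
  rw [← h]
  simp only [RCLike.star_def, Complex.conj_conj]
  ring

theorem stmt_10 {N : ℕ} (C : Matrix (Fin N) (Fin N) ℂ) (hC : C.IsHermitian)
    (a0 : ℝ) (ha0 : 0 < a0)
    (hlb : ∀ u : Fin N → ℂ, a0 * cl2sq u ≤ quadC C u)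
    (x y : Fin N → ℂ) (hx : onTorus x)
    (hCx : ∀ i, (C.mulVec x) i ≠ 0)
    (hy : ∀ i, y i = (C.mulVec x) i / (‖(C.mulVec x) i‖ : ℂ)) :
    a0 * cl2sq (fun i => y i - x i) ≤ quadC C y - quadC C x := by
  set d : Fin N → ℂ := fun i => y i - x i with hd
  have hyd : y = x + d := by funext i; simp [hd]
  -- cross term
  have cross_nonneg : 0 ≤ (star d ⬝ᵥ C.mulVec x).re := by
    have : (star d ⬝ᵥ C.mulVec x).re = ∑ i, ((starRingEnd ℂ) (d i) * (C.mulVec x) i).re := by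
      rw [dotProduct, Complex.re_sum]; rfl
    rw [this]
    apply Finset.sum_nonneg
    intro i _
    set z := (C.mulVec x) i with hz
    have hz0 : z ≠ 0 := hCx i
    have habs : (0:ℝ) < ‖z‖ := norm_pos_iff.mpr hz0
    have h1 : ((starRingEnd ℂ) (y i) * z).re = ‖z‖ := by
      rw [hy i, ← hz, map_div₀, Complex.conj_ofReal, div_mul_eq_mul_div,
        mul_comm, Complex.mul_conj, Complex.normSq_eq_norm_sq]
      rw [← Complex.ofReal_div, Complex.ofReal_re, pow_two, mul_div_assoc,
        div_self habs.ne', mul_one]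
    have h2 : ((starRingEnd ℂ) (x i) * z).re ≤ ‖z‖ := by
      calc ((starRingEnd ℂ) (x i) * z).re ≤ ‖(starRingEnd ℂ) (x i) * z‖ :=
            Complex.re_le_norm _
        _ = ‖z‖ := by
            rw [norm_mul, Complex.norm_conj, hx i, one_mul]
    have : ((starRingEnd ℂ) (d i) * z).re
        = ((starRingEnd ℂ) (y i) * z).re - ((starRingEnd ℂ) (x i) * z).re := by
      simp [hd, sub_mul]
    rw [this, h1]
    linarith
  -- expansion
  have expand : quadC C y = quadC C x + quadC C d + 2 * (star d ⬝ᵥ C.mulVec x).re := by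
    have hsw : star x ⬝ᵥ C.mulVec d = star (star d ⬝ᵥ C.mulVec x) := herm_swap C hC x d
    have : star y ⬝ᵥ C.mulVec y
        = star x ⬝ᵥ C.mulVec x + star d ⬝ᵥ C.mulVec d
          + (star x ⬝ᵥ C.mulVec d + star d ⬝ᵥ C.mulVec x) := by
      rw [hyd, star_add, mulVec_add, add_dotProduct, dotProduct_add, dotProduct_add]
      ring
    have hre : (star y ⬝ᵥ C.mulVec y).re
        = (star x ⬝ᵥ C.mulVec x).re + (star d ⬝ᵥ C.mulVec d).re
          + 2 * (star d ⬝ᵥ C.mulVec x).re := by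
      rw [this, hsw]
      simp only [Complex.add_re, Complex.conj_re, RCLike.star_def]
      ring
    simpa [quadC] using hre
  have hlbd := hlb d
  have : a0 * cl2sq d ≤ quadC C y - quadC C x := by
    rw [expand]; linarith
  simpa [hd] using this
end
end

section
/- Let C be a Hermitian N×N matrix and define the power-method map T(x) = sgn(Cx) on T^N (assuming (Cx)_i ≠ 0 for all i along the iterates). Then f(x) = x^H C x satisfies f(T(x)) ≥ f(x), with equality only if T(x) = x; hence the iterates of the generalized power method do not cycle when C ⪰ 0. -/
open Matrix Finset

noncomputable section

theorem stmt_11 {N : ℕ} (C : Matrix (Fin N) (Fin N) ℂ) (hC : C.IsHermitian)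
    (hPSD : ∀ u : Fin N → ℂ, 0 ≤ quadC C u)
    (x : Fin N → ℂ) (hx : onTorus x)
    (hCx : ∀ i, (C.mulVec x) i ≠ 0)
    (Tx : Fin N → ℂ)
    (hTx : ∀ i, Tx i = (C.mulVec x) i / (‖(C.mulVec x) i‖ : ℂ)) :
    quadC C x ≤ quadC C Tx ∧ (quadC C Tx = quadC C x → Tx = x) := by
  unfold onTorus at hx
  unfold quadC at hPSD ⊢
  set y := C.mulVec x with hy
  have habs : ∀ i, (‖y i‖ : ℝ) ≠ 0 := fun i => norm_ne_zero_iff.mpr (hCx i)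
  set S : ℝ := ∑ i, ‖y i‖ with hS
  -- Claim A
  have ht : ∀ i, star (Tx i) * y i = ((‖y i‖ : ℝ) : ℂ) := by
    intro i
    rw [hTx i]
    rw [show star (y i / (‖y i‖ : ℂ)) = star (y i) / (‖y i‖ : ℂ) by
      rw [star_div₀]; rw [Complex.star_def, Complex.conj_ofReal]]
    rw [div_mul_eq_mul_div, Complex.star_def, ← Complex.normSq_eq_conj_mul_self,
      Complex.normSq_eq_norm_sq]
    push_cast
    rw [sq, mul_div_assoc, div_self (Complex.ofReal_ne_zero.mpr (habs _)), mul_one]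
  have hA : star Tx ⬝ᵥ y = (S : ℂ) := by
    simp only [dotProduct, Pi.star_apply, ht, hS]
    push_cast
    rfl
  -- termwise bound for claim B
  have hterm : ∀ i, ((starRingEnd ℂ) (x i) * y i).re ≤ ‖y i‖ := by
    intro i
    calc ((starRingEnd ℂ) (x i) * y i).re ≤ ‖(starRingEnd ℂ) (x i) * y i‖ :=
          Complex.re_le_norm _
      _ = ‖y i‖ := by
          rw [norm_mul, Complex.norm_conj, hx i, one_mul]
  have hqx : (star x ⬝ᵥ y).re = ∑ i, ((starRingEnd ℂ) (x i) * y i).re := by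
    simp [dotProduct, Complex.re_sum, Complex.star_def]
  -- Claim B : quad x ≤ S
  have hB : (star x ⬝ᵥ y).re ≤ S := by
    rw [hqx, hS]
    exact Finset.sum_le_sum fun i _ => hterm i
  -- Hermitian symmetry
  have hsym : ∀ u v : Fin N → ℂ, star u ⬝ᵥ C.mulVec v = star (star v ⬝ᵥ C.mulVec u) := by
    intro u v
    rw [star_dotProduct, star_mulVec, hC.eq, ← dotProduct_mulVec]
  have hcross : (star x ⬝ᵥ C.mulVec Tx).re = S := by
    rw [hsym x Tx, ← hy, hA]
    simp
  -- PSD expansion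
  have hexp : star (Tx - x) ⬝ᵥ C.mulVec (Tx - x)
      = star Tx ⬝ᵥ C.mulVec Tx - star Tx ⬝ᵥ y - (star x ⬝ᵥ C.mulVec Tx - star x ⬝ᵥ y) := by
    rw [hy, star_sub, mulVec_sub, sub_dotProduct, dotProduct_sub, dotProduct_sub]
  have hkey : 0 ≤ (star Tx ⬝ᵥ C.mulVec Tx).re - 2 * S + (star x ⬝ᵥ y).re := by
    have h0 := hPSD (Tx - x)
    rw [hexp] at h0
    simp only [Complex.sub_re] at h0
    rw [hA, hcross] at h0
    simp only [Complex.ofReal_re] at h0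
    linarith
  refine ⟨by linarith, ?_⟩
  intro heq
  have hSq : S ≤ (star x ⬝ᵥ y).re := by linarith
  have hsum : ∑ i, ((starRingEnd ℂ) (x i) * y i).re = ∑ i, ‖y i‖ :=
    le_antisymm (Finset.sum_le_sum fun i _ => hterm i) (by rw [← hqx, ← hS]; exact hSq)
  have hall := (Finset.sum_eq_sum_iff_of_le (fun i _ => hterm i)).mp hsum
  funext i
  have h1 : ((starRingEnd ℂ) (x i) * y i).re = ‖y i‖ :=
    hall i (Finset.mem_univ i)
  set z := (starRingEnd ℂ) (x i) * y i with hz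
  have habz : ‖z‖ = ‖y i‖ := by
    rw [hz, norm_mul, Complex.norm_conj, hx i, one_mul]
  have h2 : ‖z‖ ^ 2 = z.re ^ 2 + z.im ^ 2 := by
    rw [Complex.sq_norm, Complex.normSq_apply]; ring
  have him2 : z.im ^ 2 = 0 := by rw [habz, h1] at h2; linarith
  have him : z.im = 0 := sq_eq_zero_iff.mp him2
  have hzc : z = ((‖y i‖ : ℝ) : ℂ) := by
    apply Complex.ext <;> simp [h1, him]
  have hyi : y i = x i * (‖y i‖ : ℂ) := by
    have h3 := congrArg (fun w => x i * w) hzc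
    simp only [hz, ← mul_assoc] at h3
    rw [show x i * (starRingEnd ℂ) (x i) = 1 by
      rw [Complex.mul_conj]; norm_cast; rw [Complex.normSq_eq_norm_sq, hx i]; norm_num,
      one_mul] at h3
    exact h3
  rw [hTx i]
  set a : ℂ := ((‖y i‖ : ℝ) : ℂ) with ha
  have hane : a ≠ 0 := by
    rw [ha]; exact_mod_cast habs i
  rw [hyi, mul_div_assoc, div_self hane, mul_one]
end
end
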